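/- arXiv:math/0701610 — 2 statements merged into one kernel-verified Lean document; each statement's English description precedes it below -/
import Mathlib

section
/- Let p > q ≥ 1 be coprime integers, and suppose that p/q = [a₁,…,aₙ]⁻ and p/(p−q) = [b₁,…,b_m]⁻, with a₁,…,aₙ ≥ 2 and b₁,…,b_m ≥ 2. Then Σᵢ₌₁ⁿ (aᵢ−3) + Σⱼ₌₁ᵐ (bⱼ−3) = −2. -/
open Finset

/-- The intersection form on `ℤⁿ` determined by `eᵢ·eⱼ = -δᵢⱼ` on the standard basis. -/
def dotD {n : ℕ} (x y : Fin n → ℤ) : ℤ := -∑ i, x i * y i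

theorem dotD_comm {n : ℕ} (x y : Fin n → ℤ) : dotD x y = dotD y x := by
  unfold dotD
  congr 1
  exact Finset.sum_congr rfl fun i _ => mul_comm _ _

/-- Conditions (*) for the family `v₁, …, vₙ`. -/
def CondsD {n : ℕ} (v : Fin n → Fin n → ℤ) : Prop :=
  (∀ i, dotD (v i) (v i) ≤ -2) ∧
  (∀ i j : Fin n, Nat.dist i.1 j.1 = 1 →
    dotD (v i) (v j) = 0 ∨ dotD (v i) (v j) = 1) ∧
  (∀ i j : Fin n, 1 < Nat.dist i.1 j.1 → dotD (v i) (v j) = 0)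

/-- Two vectors of `ℤⁿ` are linked if some coordinate is nonzero in both. -/
def LinkedD {n : ℕ} (x y : Fin n → ℤ) : Prop := ∃ i, x i ≠ 0 ∧ y i ≠ 0

/-- Irreducibility of a family: any two members are joined by a chain of
consecutively linked members. -/
def IrreducibleD {n : ℕ} (v : Fin n → Fin n → ℤ) : Prop :=
  ∀ a b : Fin n, Relation.ReflTransGen (fun c d => LinkedD (v c) (v d)) a b

/-- A good subset: irreducible and satisfying (*). -/
def GoodD {n : ℕ} (v : Fin n → Fin n → ℤ) : Prop := IrreducibleD v ∧ CondsD v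

/-- A standard subset: (*) holds and consecutive members pair to `1`. -/
def StandardD {n : ℕ} (v : Fin n → Fin n → ℤ) : Prop :=
  CondsD v ∧ ∀ i j : Fin n, (j : ℕ) = (i : ℕ) + 1 → dotD (v i) (v j) = 1

/-- The invariant `I(S) = ∑ (-vᵢ·vᵢ - 3)`. -/
def ID {n : ℕ} (v : Fin n → Fin n → ℤ) : ℤ := ∑ i, (-dotD (v i) (v i) - 3)

/-- `E^S_i = { j | vⱼ·eᵢ ≠ 0 }`. -/
def ED {n : ℕ} (v : Fin n → Fin n → ℤ) (i : Fin n) : Finset (Fin n) :=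
  Finset.univ.filter fun j => v j i ≠ 0

/-- `Vᵢ = { j | vᵢ·eⱼ ≠ 0 }`. -/
def VD {n : ℕ} (v : Fin n → Fin n → ℤ) (i : Fin n) : Finset (Fin n) :=
  Finset.univ.filter fun j => v i j ≠ 0

/-- `pₖ(S) = #{ i | |E^S_i| = k }`. -/
def pD {n : ℕ} (v : Fin n → Fin n → ℤ) (k : ℕ) : ℕ :=
  (Finset.univ.filter fun i : Fin n => (ED v i).card = k).card

/-- The intersection graph: `vᵢ, vⱼ` are joined iff `vᵢ·vⱼ = 1`. -/
def graphD {n : ℕ} (v : Fin n → Fin n → ℤ) : SimpleGraph (Fin n) where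
  Adj a b := a ≠ b ∧ dotD (v a) (v b) = 1
  symm := ⟨fun a b h => ⟨Ne.symm h.1, by rw [dotD_comm]; exact h.2⟩⟩
  loopless := ⟨fun a h => h.1 rfl⟩

/-- `c(S)`: the number of connected components of the intersection graph. -/
noncomputable def cD {n : ℕ} (v : Fin n → Fin n → ℤ) : ℕ :=
  Nat.card (graphD v).ConnectedComponent

def degSumD {n : ℕ} (v : Fin n → Fin n → ℤ) (j : Fin n) : ℤ :=
  ∑ i ∈ Finset.univ.erase j, dotD (v i) (v j)

def IsolatedD {n : ℕ} (v : Fin n → Fin n → ℤ) (j : Fin n) : Prop := degSumD v j = 0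
def FinalD {n : ℕ} (v : Fin n → Fin n → ℤ) (j : Fin n) : Prop := degSumD v j = 1
def InternalD {n : ℕ} (v : Fin n → Fin n → ℤ) (j : Fin n) : Prop := degSumD v j = 2

/-- `π_{e_h}`: projection orthogonal to `e_h` (kills the `h`-th coordinate). -/
def projD {n : ℕ} (h : Fin n) (x : Fin n → ℤ) : Fin n → ℤ := Function.update x h 0

/-- The family obtained from `v` by replacing `v t` with `π_{e_j}(v t)`, deleting the
member of index `s`, and restricting to the coordinates other than the `i`-th one. -/
def contrGen {n : ℕ} (v : Fin (n + 1) → Fin (n + 1) → ℤ) (s t j i : Fin (n + 1)) :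
    Fin n → Fin n → ℤ :=
  fun k l => Function.update v t (projD j (v t)) (s.succAbove k) (i.succAbove l)

/-- `S ↘ S'` : `w` is obtained from `v` by a contraction (equivalently, `v` is obtained
from `w` by an expansion). -/
def ContractionD {n : ℕ} (v : Fin (n + 1) → Fin (n + 1) → ℤ)
    (w : Fin n → Fin n → ℤ) : Prop :=
  CondsD v ∧ (∀ i j, |v i j| ≤ 1) ∧
  ∃ h s t : Fin (n + 1), s ≠ t ∧ ED v h = {s, t} ∧ dotD (v t) (v t) < -2 ∧
    w = contrGen v s t h h

/-- Bad components: base case is a good subset with a connected component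
`{v_{s-1}, v_s, v_{s+1}}` with squares `(-2, <-2, -2)` and `E_j = {s-1,s,s+1}` for some
`j`; further bad components are obtained by expansions adding a final `(-2)`-vector
attached to the component, preserving the number of connected components. -/
inductive BadC : (n : ℕ) → (Fin n → Fin n → ℤ) → Finset (Fin n) → Prop
  | base {n : ℕ} (v : Fin n → Fin n → ℤ) (p s q : Fin n)
      (hgood : GoodD v)
      (hp : (p : ℕ) + 1 = (s : ℕ)) (hq : (s : ℕ) + 1 = (q : ℕ))
      (hp2 : dotD (v p) (v p) = -2) (hq2 : dotD (v q) (v q) = -2)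
      (hs2 : dotD (v s) (v s) < -2)
      (hps : (graphD v).Adj p s) (hsq : (graphD v).Adj s q)
      (hcomp : ∀ r, r ∉ ({p, s, q} : Finset (Fin n)) →
        ¬ (graphD v).Adj r p ∧ ¬ (graphD v).Adj r s ∧ ¬ (graphD v).Adj r q)
      (hE : ∃ j, ED v j = {p, s, q}) :
      BadC n v {p, s, q}
  | step {n : ℕ} (v : Fin (n + 1) → Fin (n + 1) → ℤ) (w : Fin n → Fin n → ℤ)
      (C : Finset (Fin n)) (h s t : Fin (n + 1))
      (hw : BadC n w C)
      (hconds : CondsD v) (hsmall : ∀ i j, |v i j| ≤ 1)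
      (hst : s ≠ t) (hE : ED v h = {s, t}) (ht : dotD (v t) (v t) < -2)
      (hwdef : w = contrGen v s t h h)
      (hfin : FinalD v s) (hs2 : dotD (v s) (v s) = -2)
      (hadj : dotD (v s) (v t) = 1)
      (htC : ∃ c ∈ C, s.succAbove c = t)
      (hc : cD v = cD w) :
      BadC (n + 1) v (insert s (C.image s.succAbove))

/-- `b(S)`: the number of bad components. -/
noncomputable def bD {n : ℕ} (v : Fin n → Fin n → ℤ) : ℕ :=
  Set.ncard {C : Finset (Fin n) | BadC n v C}

/-- `S` has no bad components. -/
def NoBadD {n : ℕ} (v : Fin n → Fin n → ℤ) : Prop := ∀ C, ¬ BadC n v C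

/-- The string `(a₁, …, aₙ)` of a family, where `aᵢ = -vᵢ·vᵢ`. -/
def aStr {n : ℕ} (v : Fin n → Fin n → ℤ) : List ℤ :=
  List.ofFn fun i => -dotD (v i) (v i)

/-- The negative continued fraction `[a₁, …, aₙ]⁻ = a₁ - 1/(a₂ - 1/(⋯ - 1/aₙ))`. -/
def negCF : List ℚ → ℚ
  | [] => 0
  | [a] => a
  | a :: b :: l => a - 1 / negCF (b :: l)

/-- The two operations on strings from Lemma 7.1:
`(s₁,…,s_k) ↦ (s₁+1, s₂, …, s_k, 2)` and `(s₁,…,s_k) ↦ (2, s₁, …, s_{k-1}, s_k+1)`. -/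
def StepOp (l l' : List ℤ) : Prop :=
  (∃ (s : ℤ) (r : List ℤ), l = s :: r ∧ l' = (s + 1) :: (r ++ [2])) ∨
  (∃ (s : ℤ) (r : List ℤ), l = r ++ [s] ∧ l' = (2 :: r) ++ [s + 1])

/-- Inner part of the string pattern of Lemma 7.1; the input is `[c_j, c_{j-1}, …, c₁]`. -/
def innerR : List ℤ → List ℤ
  | [] => []
  | [c] => (c + 2) :: List.replicate (c + 1).toNat (2 : ℤ)
  | c :: c' :: cs =>
      ((c + 2) :: (innerR (c' :: cs)).reverse) ++ List.replicate (c - 1).toNat (2 : ℤ)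

/-- The string `(c_k+1, 2^[c_{k-1}-1], c_{k-2}+2, …, 2^[c₂-1], c₁+2, 2^[c₁+1], c₂+2, …,
c_{k-1}+2, 2^[c_k-1])`, with `rest = [c_{k-2}, …, c₁]`. -/
def bigP (ck ck1 : ℤ) (rest : List ℤ) : List ℤ :=
  (ck + 1) :: (List.replicate (ck1 - 1).toNat (2 : ℤ) ++ innerR rest ++ [ck1 + 2] ++
    List.replicate (ck - 1).toNat (2 : ℤ))

/-- The string `(c₁+1, 2^[c₁+1])`. -/
def baseP (c : ℤ) : List ℤ := (c + 1) :: List.replicate (c + 1).toNat (2 : ℤ)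

lemma negCF_cons_cons (c d : ℚ) (t : List ℚ) :
    negCF (c :: d :: t) = c - 1 / negCF (d :: t) := rfl

lemma negCF_icc (c d : ℤ) (t : List ℤ) :
    negCF ((c :: d :: t).map (Int.cast : ℤ → ℚ)) =
      (c : ℚ) - 1 / negCF ((d :: t).map (Int.cast : ℤ → ℚ)) := rfl

lemma negCF_ione (c : ℤ) : negCF (([c]).map (Int.cast : ℤ → ℚ)) = (c : ℚ) := rfl

lemma one_lt_negCF : ∀ (l : List ℚ), l ≠ [] → (∀ x ∈ l, 2 ≤ x) → 1 < negCF l := by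
  intro l
  induction l with
  | nil => intro h; exact absurd rfl h
  | cons a t ih =>
    intro _ h2
    cases t with
    | nil =>
      have ha := h2 a (by simp)
      rw [show negCF [a] = a from rfl]; linarith
    | cons b t' =>
      have hT : 1 < negCF (b :: t') := ih (by simp) (fun x hx => h2 x (by simp [hx]))
      have h0 : 0 < negCF (b :: t') := by linarith
      have hlt : 1 / negCF (b :: t') < 1 := by rw [div_lt_one h0]; exact hT
      have hpos : 0 < 1 / negCF (b :: t') := by positivity
      have ha := h2 a (by simp)
      rw [negCF_cons_cons]
      linarith

lemma listcast_eq (a : List ℤ) :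
    (a.map fun x => (x : ℚ)) = a.map (Int.cast : ℤ → ℚ) := by
  simp
  induction a with
  | nil => rfl
  | cons c t ih => simp_all

lemma one_lt_negCF_int (l : List ℤ) (h : l ≠ []) (h2 : ∀ x ∈ l, 2 ≤ x) :
    1 < negCF (l.map (Int.cast : ℤ → ℚ)) := by
  refine one_lt_negCF _ (fun hm => h (List.map_eq_nil_iff.mp hm)) ?_
  intro x hx
  rw [List.mem_map] at hx
  obtain ⟨y, hy, rfl⟩ := hx
  exact_mod_cast h2 y hy

lemma sum_of_negCF_eq_two (a : List ℤ) (ha : ∀ x ∈ a, 2 ≤ x)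
    (hA : negCF (a.map (Int.cast : ℤ → ℚ)) = 2) :
    (a.map fun x => x - 3).sum = -1 := by
  match a with
  | [] => simp [negCF] at hA
  | [c] =>
    rw [negCF_ione] at hA
    have : c = 2 := by exact_mod_cast hA
    simp [this]
  | c :: d :: t =>
    exfalso
    rw [negCF_icc] at hA
    set T := negCF ((d :: t).map (Int.cast : ℤ → ℚ)) with hTdef
    have hT : 1 < T := one_lt_negCF_int _ (by simp) (fun x hx => ha x (by simp [hx]))
    have h0 : 0 < T := by linarith
    have hlt : 1 / T < 1 := by rw [div_lt_one h0]; exact hT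
    have hpos : 0 < 1 / T := by positivity
    have hc2 : 2 ≤ c := ha c (by simp)
    have hc2' : (2 : ℚ) ≤ (c : ℚ) := by exact_mod_cast hc2
    have hc3 : (c : ℚ) < 3 := by linarith
    have hc3' : c < 3 := by exact_mod_cast hc3
    have hc : c = 2 := by omega
    rw [hc] at hA
    have : 1 / T = 0 := by push_cast at hA; linarith
    linarith

lemma decomp_lt_two (b : List ℤ) (hb : ∀ x ∈ b, 2 ≤ x) (y : ℚ)
    (hy : negCF (b.map (Int.cast : ℤ → ℚ)) = y) (h1 : 1 < y) (h2 : y < 2) :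
    ∃ tb, b = 2 :: tb ∧ tb ≠ [] ∧ negCF (tb.map (Int.cast : ℤ → ℚ)) = 1 / (2 - y) := by
  match b with
  | [] => exfalso; simp [negCF] at hy; linarith
  | [c] =>
    exfalso
    rw [negCF_ione] at hy
    have hc : 2 ≤ c := hb c (by simp)
    have : (2 : ℚ) ≤ (c : ℚ) := by exact_mod_cast hc
    linarith
  | c :: d :: t =>
    rw [negCF_icc] at hy
    set T := negCF ((d :: t).map (Int.cast : ℤ → ℚ)) with hTdef
    have hT : 1 < T := one_lt_negCF_int _ (by simp) (fun x hx => hb x (by simp [hx]))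
    have h0 : 0 < T := by linarith
    have hlt : 1 / T < 1 := by rw [div_lt_one h0]; exact hT
    have hpos : 0 < 1 / T := by positivity
    have hc2 : 2 ≤ c := hb c (by simp)
    have hc2' : (2 : ℚ) ≤ (c : ℚ) := by exact_mod_cast hc2
    have hc3 : (c : ℚ) < 3 := by linarith
    have hc3' : c < 3 := by exact_mod_cast hc3
    have hc : c = 2 := by omega
    refine ⟨d :: t, by rw [hc], by simp, ?_⟩
    rw [hc] at hy
    have h2y : 2 - y = 1 / T := by push_cast at hy; linarith
    rw [← hTdef, h2y, one_div_one_div]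

lemma decomp_gt_two (a : List ℤ) (ha : ∀ x ∈ a, 2 ≤ x) (x : ℚ)
    (hx : negCF (a.map (Int.cast : ℤ → ℚ)) = x) (h2 : 2 < x) :
    ∃ c ta, a = c :: ta ∧ 3 ≤ c ∧
      negCF (((c - 1) :: ta).map (Int.cast : ℤ → ℚ)) = x - 1 := by
  match a with
  | [] => exfalso; simp [negCF] at hx; linarith
  | [c] =>
    rw [negCF_ione] at hx
    refine ⟨c, [], rfl, ?_, ?_⟩
    · have : (2 : ℚ) < (c : ℚ) := by linarith
      have : 2 < c := by exact_mod_cast this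
      omega
    · rw [negCF_ione]; push_cast; linarith
  | c :: d :: t =>
    rw [negCF_icc] at hx
    set T := negCF ((d :: t).map (Int.cast : ℤ → ℚ)) with hTdef
    have hT : 1 < T := one_lt_negCF_int _ (by simp) (fun z hz => ha z (by simp [hz]))
    have h0 : 0 < T := by linarith
    have hpos : 0 < 1 / T := by positivity
    refine ⟨c, d :: t, rfl, ?_, ?_⟩
    · have : (2 : ℚ) < (c : ℚ) := by linarith
      have : 2 < c := by exact_mod_cast this
      omega
    · rw [negCF_icc, ← hTdef]; push_cast; linarith

lemma negsum_aux : ∀ (N : ℕ) (p q : ℤ), p ≤ (N : ℤ) → 1 ≤ q → q < p → IsCoprime p q →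
    ∀ (a b : List ℤ), (∀ x ∈ a, 2 ≤ x) → (∀ x ∈ b, 2 ≤ x) →
    negCF (a.map (Int.cast : ℤ → ℚ)) = (p : ℚ) / (q : ℚ) →
    negCF (b.map (Int.cast : ℤ → ℚ)) = (p : ℚ) / ((p : ℚ) - (q : ℚ)) →
    (a.map fun x => x - 3).sum + (b.map fun x => x - 3).sum = -2 := by
  intro N
  induction N with
  | zero =>
    intro p q hpN hq hpq
    exfalso
    push_cast at hpN
    omega
  | succ N ih =>
    intro p q hpN hq hpq hcop a b ha hb hA hB
    obtain ⟨u, v, huv⟩ := hcop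
    have hq0 : (0 : ℚ) < (q : ℚ) := by exact_mod_cast (by omega : (0:ℤ) < q)
    have hpmq : (0:ℤ) < p - q := by omega
    have hpq0 : (0 : ℚ) < (p : ℚ) - (q : ℚ) := by
      have : ((0:ℤ):ℚ) < ((p - q : ℤ) : ℚ) := by exact_mod_cast hpmq
      push_cast at this; linarith
    rcases lt_trichotomy p (2 * q) with hlt | heq | hgt
    · -- p < 2q
      have h2q : ((p:ℚ)) < 2 * (q:ℚ) := by
        have : ((p:ℤ):ℚ) < ((2*q : ℤ):ℚ) := by exact_mod_cast hlt
        push_cast at this; linarith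
      have hqp : ((q:ℚ)) < (p:ℚ) := by exact_mod_cast hpq
      have hx1 : 1 < (p : ℚ) / (q : ℚ) := by rw [lt_div_iff₀ hq0]; linarith
      have hx2 : (p : ℚ) / (q : ℚ) < 2 := by rw [div_lt_iff₀ hq0]; linarith
      obtain ⟨ta, hael, htane, hta⟩ := decomp_lt_two a ha _ hA hx1 hx2
      have hy2 : 2 < (p : ℚ) / ((p : ℚ) - (q : ℚ)) := by rw [lt_div_iff₀ hpq0]; linarith
      obtain ⟨c, tb, hbel, hc3, hb'⟩ := decomp_gt_two b hb _ hB hy2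
      have hq2 : 2 ≤ q := by
        by_contra h
        have : q = 1 := by omega
        omega
      have hsum := ih q (2 * q - p) (by push_cast at hpN ⊢; omega) (by omega) (by omega)
        ⟨v + 2 * u, -u, by linear_combination huv⟩ ta ((c - 1) :: tb)
        (fun x hx => ha x (by rw [hael]; simp [hx]))
        (by
          intro x hx
          rcases List.mem_cons.mp hx with rfl | hx
          · omega
          · exact hb x (by rw [hbel]; simp [hx]))
        (by
          rw [hta]
          have h2qp : (0:ℚ) < 2 * (q:ℚ) - (p:ℚ) := by linarith
          have : ((2 * q - p : ℤ) : ℚ) = 2 * (q:ℚ) - (p:ℚ) := by push_cast; ring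
          rw [this]
          rw [eq_div_iff (by linarith)]
          field_simp)
        (by
          rw [hb']
          have hden : ((q:ℚ)) - ((2 * q - p : ℤ) : ℚ) = (p:ℚ) - (q:ℚ) := by push_cast; ring
          rw [hden, div_sub_one (by linarith)]
          congr 1
          push_cast; ring)
      rw [hael, hbel]
      simp only [List.map_cons, List.sum_cons] at hsum ⊢
      omega
    · -- p = 2q forces q = 1, p = 2
      have hqd : q ∣ p := ⟨2, by omega⟩
      have hu : IsUnit q := IsCoprime.isUnit_of_dvd' (show IsCoprime p q from ⟨u, v, huv⟩) hqd dvd_rfl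
      have hq1 : q = 1 := by rcases Int.isUnit_iff.mp hu with h | h <;> omega
      have hp2 : p = 2 := by omega
      rw [hq1, hp2] at hA hB
      norm_num at hA hB
      have := sum_of_negCF_eq_two a ha hA
      have := sum_of_negCF_eq_two b hb hB
      omega
    · -- 2q < p
      have h2q : 2 * (q:ℚ) < (p:ℚ) := by
        have : ((2*q : ℤ):ℚ) < ((p:ℤ):ℚ) := by exact_mod_cast hgt
        push_cast at this; linarith
      have hqp : ((q:ℚ)) < (p:ℚ) := by exact_mod_cast hpq
      have hx2 : 2 < (p : ℚ) / (q : ℚ) := by rw [lt_div_iff₀ hq0]; linarith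
      obtain ⟨c, ta, hael, hc3, ha'⟩ := decomp_gt_two a ha _ hA hx2
      have hy1 : 1 < (p : ℚ) / ((p : ℚ) - (q : ℚ)) := by rw [lt_div_iff₀ hpq0]; linarith
      have hy2 : (p : ℚ) / ((p : ℚ) - (q : ℚ)) < 2 := by rw [div_lt_iff₀ hpq0]; linarith
      obtain ⟨tb, hbel, htbne, htb⟩ := decomp_lt_two b hb _ hB hy1 hy2
      have hsum := ih (p - q) q (by push_cast at hpN ⊢; omega) (by omega) (by omega)
        ⟨u, v + u, by linear_combination huv⟩ ((c - 1) :: ta) tb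
        (by
          intro x hx
          rcases List.mem_cons.mp hx with rfl | hx
          · omega
          · exact ha x (by rw [hael]; simp [hx]))
        (fun x hx => hb x (by rw [hbel]; simp [hx]))
        (by
          rw [ha']
          have hden : (((p - q : ℤ)) : ℚ) = (p:ℚ) - (q:ℚ) := by push_cast; ring
          rw [hden, div_sub_one (by linarith)])
        (by
          rw [htb]
          have hnum : (((p - q : ℤ)) : ℚ) = (p:ℚ) - (q:ℚ) := by push_cast; ring
          rw [hnum]
          have hden2 : (0:ℚ) < (p:ℚ) - 2*(q:ℚ) := by linarith
          have key : 2 - (p:ℚ)/((p:ℚ)-(q:ℚ)) = ((p:ℚ) - 2*(q:ℚ))/((p:ℚ)-(q:ℚ)) := by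
            field_simp; ring
          rw [key, one_div_div]
          congr 1
          · ring)
      rw [hael, hbel]
      simp only [List.map_cons, List.sum_cons] at hsum ⊢
      omega

/-- Lemma 2.7 (`l:negsum`). -/
theorem lemma_negsum (p q : ℤ) (hq : 1 ≤ q) (hpq : q < p) (hcop : IsCoprime p q)
    (a b : List ℤ) (ha : ∀ x ∈ a, 2 ≤ x) (hb : ∀ x ∈ b, 2 ≤ x)
    (hA : negCF (a.map fun x => (x : ℚ)) = (p : ℚ) / (q : ℚ))
    (hB : negCF (b.map fun x => (x : ℚ)) = (p : ℚ) / ((p : ℚ) - (q : ℚ))) :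
    (a.map fun x => x - 3).sum + (b.map fun x => x - 3).sum = -2 := by
  rw [listcast_eq] at hA hB
  exact negsum_aux p.toNat p q (Int.self_le_toNat p) hq hpq hcop a b ha hb hA hB
end

section
/- Suppose a₁,…,aₙ ≥ 2 are integers, m and k are coprime integers with 0 < k < m, ε ∈ {+1, −1}, and [a₁,…,aₙ]⁻ = m²/(mk + ε). Then [2, a₁,…,aₙ, aₙ+1]⁻ = (2m−k)²/((2m−k)m + ε) and [a₁+1, a₂,…,aₙ, 2]⁻ = (m+k)²/((m+k)k + ε). -/
open Finset

def mstep (a : ℤ) (s : ℤ × ℤ) : ℤ × ℤ := (a * s.1 - s.2, s.1)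

def mrec (s : ℤ × ℤ) (l : List ℤ) : ℤ × ℤ := l.foldr mstep s

lemma mrec_nil (s : ℤ × ℤ) : mrec s [] = s := rfl
lemma mrec_cons (s : ℤ × ℤ) (a : ℤ) (l : List ℤ) : mrec s (a :: l) = mstep a (mrec s l) := rfl
lemma mrec_append (s : ℤ × ℤ) (l₁ l₂ : List ℤ) : mrec s (l₁ ++ l₂) = mrec (mrec s l₂) l₁ := by
  unfold mrec; rw [List.foldr_append]

lemma mrec_seed (l : List ℤ) (u v : ℤ) :
    mrec (u, v) l = (u * (mrec (1,0) l).1 + v * (mrec (0,1) l).1,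
                     u * (mrec (1,0) l).2 + v * (mrec (0,1) l).2) := by
  induction l with
  | nil => simp [mrec_nil]
  | cons a l ih =>
    simp only [mrec_cons, ih, mstep, Prod.mk.injEq]
    exact ⟨by ring, trivial⟩

lemma mrec_det (l : List ℤ) :
    (mrec (1,0) l).1 * (mrec (0,1) l).2 - (mrec (0,1) l).1 * (mrec (1,0) l).2 = 1 := by
  induction l with
  | nil => simp [mrec_nil]
  | cons a l ih => simp only [mrec_cons, mstep]; linear_combination ih

lemma mrec_key (l : List ℤ) (hl : ∀ x ∈ l, 2 ≤ x) :
    0 ≤ (mrec (1,0) l).2 ∧ (mrec (1,0) l).2 < (mrec (1,0) l).1 ∧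
      (l ≠ [] → 1 ≤ (mrec (1,0) l).2 ∧
        negCF (l.map fun x => (x : ℚ)) = ((mrec (1,0) l).1 : ℚ) / ((mrec (1,0) l).2 : ℚ)) := by
  induction l with
  | nil => exact ⟨le_refl 0, by norm_num [mrec_nil], fun h => absurd rfl h⟩
  | cons a l ih =>
    have ha : 2 ≤ a := hl a (by simp)
    obtain ⟨h1, h2, h3⟩ := ih (fun x hx => hl x (by simp [hx]))
    obtain ⟨P, Q, hPQ⟩ : ∃ x y, mrec (1,0) l = (x, y) := ⟨_, _, rfl⟩
    have hgoal : mrec (1,0) (a :: l) = (a * P - Q, P) := by rw [mrec_cons, hPQ]; rfl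
    rw [hPQ] at h1 h2 h3
    rw [hgoal]
    dsimp only at h1 h2 h3 ⊢
    have hP1 : 1 ≤ P := by linarith
    have hmul : 0 ≤ (a - 2) * P := mul_nonneg (by linarith) (by linarith)
    refine ⟨by linarith, by nlinarith, fun _ => ⟨by linarith, ?_⟩⟩
    cases l with
    | nil =>
      have h10 : (1, 0) = ((P : ℤ), (Q : ℤ)) := hPQ
      obtain ⟨hP, hQ⟩ := Prod.mk.injEq .. ▸ h10
      subst hP; subst hQ
      show (a : ℚ) = _
      norm_num
    | cons c l'' =>
      obtain ⟨h4, h5⟩ := h3 (by simp)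
      have key : negCF ((a :: c :: l'').map fun x => (x:ℚ)) =
          (a:ℚ) - 1 / negCF ((c :: l'').map fun x => (x:ℚ)) := rfl
      rw [key, h5, one_div_div]
      have hPne : (P:ℚ) ≠ 0 := by exact_mod_cast (by linarith : P ≠ 0)
      push_cast
      field_simp

lemma mrec_bounds (l : List ℤ) (hl : ∀ x ∈ l, 2 ≤ x) :
    0 ≤ -(mrec (0,1) l).1 ∧ -(mrec (0,1) l).2 ≤ -(mrec (0,1) l).1 ∧
      1 ≤ (mrec (1,0) l).2 + (mrec (0,1) l).2 ∧
      (mrec (1,0) l).2 + (mrec (0,1) l).2 ≤ (mrec (1,0) l).1 + (mrec (0,1) l).1 := by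
  induction l with
  | nil => norm_num [mrec_nil]
  | cons a l ih =>
    have ha : 2 ≤ a := hl a (by simp)
    obtain ⟨h1, h2, h3, h4⟩ := ih (fun x hx => hl x (by simp [hx]))
    obtain ⟨P, Q, hPQ⟩ : ∃ x y, mrec (1,0) l = (x, y) := ⟨_, _, rfl⟩
    obtain ⟨B, D, hBD⟩ : ∃ x y, mrec (0,1) l = (x, y) := ⟨_, _, rfl⟩
    have e1 : mrec (1,0) (a :: l) = (a * P - Q, P) := by rw [mrec_cons, hPQ]; rfl
    have e2 : mrec (0,1) (a :: l) = (a * B - D, B) := by rw [mrec_cons, hBD]; rfl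
    rw [hBD] at h1 h2
    rw [hPQ, hBD] at h3 h4
    rw [e1, e2]
    dsimp only at h1 h2 h3 h4 ⊢
    have hm1 : 0 ≤ (a - 2) * (-B) := mul_nonneg (by linarith) (by linarith)
    have hm2 : 0 ≤ (a - 2) * (P + B) := mul_nonneg (by linarith) (by linarith)
    refine ⟨by nlinarith, by nlinarith, by linarith, by nlinarith⟩

/-- Lemma 9.1 (`l:fraction`). -/
theorem lemma_fraction (m k : ℤ) (hk : 0 < k) (hkm : k < m) (hcop : IsCoprime m k)
    (ε : ℤ) (hε : ε = 1 ∨ ε = -1)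
    (a : List ℤ) (hne : a ≠ []) (ha : ∀ x ∈ a, 2 ≤ x)
    (hA : negCF (a.map fun x => (x : ℚ)) =
      ((m : ℚ)) ^ 2 / ((m : ℚ) * (k : ℚ) + (ε : ℚ))) :
    negCF ((2 :: (a.dropLast ++ [a.getLast hne + 1])).map fun x => (x : ℚ)) =
      (((2 * m - k : ℤ) : ℚ)) ^ 2 / (((2 * m - k) * m + ε : ℤ) : ℚ) ∧
    negCF (((a.head hne + 1) :: a.tail ++ [2]).map fun x => (x : ℚ)) =
      (((m + k : ℤ) : ℚ)) ^ 2 / (((m + k) * k + ε : ℤ) : ℚ) := by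
  have hm2 : 2 ≤ m := by omega
  have hε2 : ε ^ 2 = 1 := by rcases hε with h | h <;> simp [h]
  have hεle : -1 ≤ ε ∧ ε ≤ 1 := by rcases hε with h | h <;> norm_num [h]
  have hmk2 : 2 ≤ m * k := by nlinarith
  obtain ⟨p, q, hpq⟩ : ∃ x y, mrec (1,0) a = (x, y) := ⟨_, _, rfl⟩
  obtain ⟨b, d, hbd⟩ : ∃ x y, mrec (0,1) a = (x, y) := ⟨_, _, rfl⟩
  obtain ⟨hq0, hqp, hkey⟩ := mrec_key a ha
  obtain ⟨hq1, hval⟩ := hkey hne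
  rw [hpq] at hq0 hqp hq1 hval
  dsimp only at hq0 hqp hq1 hval
  have hdet : p * d - b * q = 1 := by
    have := mrec_det a; rw [hpq, hbd] at this; exact this
  obtain ⟨hB0, hBD, hqd1, hqdpb⟩ := mrec_bounds a ha
  rw [hbd] at hB0 hBD
  rw [hpq, hbd] at hqd1 hqdpb
  dsimp only at hB0 hBD hqd1 hqdpb
  have hden : (0:ℤ) < m * k + ε := by linarith [hεle.1]
  -- cross multiplication
  have hcross : p * (m * k + ε) = m ^ 2 * q := by
    rw [hval] at hA
    have hq0' : ((q : ℤ) : ℚ) ≠ 0 := by exact_mod_cast (by linarith : q ≠ 0)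
    have hd0' : ((m : ℚ) * k + ε) ≠ 0 := by exact_mod_cast hden.ne'
    rw [div_eq_div_iff hq0' hd0'] at hA
    exact_mod_cast hA
  -- coprimality
  have hcop_pq : IsCoprime p q := ⟨d, -b, by linear_combination hdet⟩
  have hcop_m : IsCoprime m (m * k + ε) := ⟨-(ε * k), ε, by linear_combination hε2⟩
  have hcop_m2 : IsCoprime (m ^ 2) (m * k + ε) := hcop_m.pow_left
  have hpm : p = m ^ 2 := by
    have h1 : p ∣ m ^ 2 :=
      hcop_pq.dvd_of_dvd_mul_right ⟨m * k + ε, by linear_combination -hcross⟩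
    have h2 : m ^ 2 ∣ p := hcop_m2.dvd_of_dvd_mul_right ⟨q, hcross⟩
    exact Int.dvd_antisymm (by linarith) (by positivity) h1 h2
  have hm2ne : (m : ℤ) ^ 2 ≠ 0 := by positivity
  have hqm : q = m * k + ε := by
    apply mul_left_cancel₀ hm2ne
    linear_combination (m * k + ε) * hpm - hcross
  have hdet' : m ^ 2 * d - b * (m * k + ε) = 1 := by rw [← hpm, ← hqm]; exact hdet
  -- value of b
  have hbv : b = -(m ^ 2 - m * k + ε) := by
    have hdvd : p ∣ (-b - (m ^ 2 - m * k + ε)) * q := by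
      refine ⟨-(d + m * k + ε - k ^ 2), ?_⟩
      rw [hpm, hqm]
      linear_combination hdet' - hε2
    have hdvd2 : p ∣ -b - (m ^ 2 - m * k + ε) := hcop_pq.dvd_of_dvd_mul_right hdvd
    have hmmk : m ≤ m * (m - k) := by nlinarith
    have habs : -b - (m ^ 2 - m * k + ε) = 0 := by
      refine Int.eq_zero_of_abs_lt_dvd hdvd2 (abs_lt.mpr ⟨?_, ?_⟩) <;> nlinarith [hεle.1, hεle.2]
    linarith
  have hdv : d = k ^ 2 - m * k - ε := by
    apply mul_left_cancel₀ hm2ne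
    linear_combination hdet' + (m * k + ε) * hbv - hε2
  -- decomposition of a from the right
  obtain ⟨p0, q0, hpq0⟩ : ∃ x y, mrec (1,0) a.dropLast = (x, y) := ⟨_, _, rfl⟩
  obtain ⟨b0, d0, hbd0⟩ : ∃ x y, mrec (0,1) a.dropLast = (x, y) := ⟨_, _, rfl⟩
  have hsplit : a.dropLast ++ [a.getLast hne] = a := List.dropLast_append_getLast hne
  have e1 : (p, q) = (a.getLast hne * p0 + 1 * b0, a.getLast hne * q0 + 1 * d0) := by
    have hh : mrec (1,0) (a.dropLast ++ [a.getLast hne]) = (p, q) := by rw [hsplit, hpq]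
    have h10 : mrec (1,0) [a.getLast hne] = (a.getLast hne, 1) := by
      show mstep _ _ = _; simp [mstep]
    rw [← hh, mrec_append, h10, mrec_seed, hpq0, hbd0]
  have e2 : (b, d) = (-1 * p0 + 0 * b0, -1 * q0 + 0 * d0) := by
    have hh : mrec (0,1) (a.dropLast ++ [a.getLast hne]) = (b, d) := by rw [hsplit, hbd]
    have h01 : mrec (0,1) [a.getLast hne] = (-1, 0) := by
      show mstep _ _ = _; simp [mstep]
    rw [← hh, mrec_append, h01, mrec_seed, hpq0, hbd0]
  have e11 : p = a.getLast hne * p0 + b0 := by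
    have := congrArg Prod.fst e1; dsimp at this; linarith
  have e12 : q = a.getLast hne * q0 + d0 := by
    have := congrArg Prod.snd e1; dsimp at this; linarith
  have e21 : b = -p0 := by
    have := congrArg Prod.fst e2; dsimp at this; linarith
  have e22 : d = -q0 := by
    have := congrArg Prod.snd e2; dsimp at this; linarith
  -- first new list
  have eL : mrec (1,0) (a.dropLast ++ [a.getLast hne + 1]) = (p - b, q - d) := by
    rw [mrec_append]
    have h10 : mrec (1,0) [a.getLast hne + 1] = (a.getLast hne + 1, 1) := by
      show mstep _ _ = _; simp [mstep]
    rw [h10, mrec_seed, hpq0, hbd0]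
    simp only [Prod.mk.injEq]
    constructor
    · linear_combination e21 - e11
    · linear_combination e22 - e12
  -- entries of first new list
  have hents1 : ∀ x ∈ 2 :: (a.dropLast ++ [a.getLast hne + 1]), 2 ≤ x := by
    intro x hx
    rcases List.mem_cons.1 hx with h | h
    · omega
    rcases List.mem_append.1 h with h | h
    · exact ha x (List.dropLast_subset a h)
    · have hg := ha _ (List.getLast_mem hne)
      simp only [List.mem_singleton] at h
      omega
  obtain ⟨-, -, hkey1⟩ := mrec_key _ hents1
  obtain ⟨-, hval1⟩ := hkey1 (by simp)
  have eL1 : mrec (1,0) (2 :: (a.dropLast ++ [a.getLast hne + 1]))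
      = (2 * (p - b) - (q - d), p - b) := by
    rw [mrec_cons, eL]; rfl
  rw [eL1] at hval1
  dsimp only at hval1
  have hN1 : 2 * (p - b) - (q - d) = (2 * m - k) ^ 2 := by
    rw [hpm, hqm, hbv, hdv]; ring
  have hQ1 : p - b = (2 * m - k) * m + ε := by rw [hpm, hbv]; ring
  refine ⟨by rw [hval1, hN1, hQ1]; push_cast; ring, ?_⟩
  -- second new list
  obtain ⟨pt, qt, hpqt⟩ : ∃ x y, mrec (1,0) a.tail = (x, y) := ⟨_, _, rfl⟩
  obtain ⟨bt, dt, hbdt⟩ : ∃ x y, mrec (0,1) a.tail = (x, y) := ⟨_, _, rfl⟩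
  have hsplit2 : a.head hne :: a.tail = a := List.cons_head_tail hne
  have f1 : (p, q) = (a.head hne * pt - qt, pt) := by
    have hh : mrec (1,0) (a.head hne :: a.tail) = (p, q) := by rw [hsplit2, hpq]
    rw [← hh, mrec_cons, hpqt]; rfl
  have f2 : (b, d) = (a.head hne * bt - dt, bt) := by
    have hh : mrec (0,1) (a.head hne :: a.tail) = (b, d) := by rw [hsplit2, hbd]
    rw [← hh, mrec_cons, hbdt]; rfl
  have f11 : p = a.head hne * pt - qt := congrArg Prod.fst f1
  have f12 : q = pt := congrArg Prod.snd f1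
  have f21 : b = a.head hne * bt - dt := congrArg Prod.fst f2
  have f22 : d = bt := congrArg Prod.snd f2
  have eL2 : mrec (1,0) (((a.head hne + 1) :: a.tail) ++ [2])
      = ((a.head hne + 1) * (2 * pt + bt) - (2 * qt + dt), 2 * pt + bt) := by
    rw [mrec_append]
    have h2' : mrec (1,0) [2] = (2, 1) := by show mstep _ _ = _; simp [mstep]
    rw [h2', mrec_cons, mrec_seed, hpqt, hbdt]
    simp only [mstep, Prod.mk.injEq]
    constructor <;> ring
  have hents2 : ∀ x ∈ ((a.head hne + 1) :: a.tail) ++ [2], 2 ≤ x := by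
    intro x hx
    rcases List.mem_append.1 hx with h | h
    · rcases List.mem_cons.1 h with h | h
      · have := ha _ (List.head_mem hne); omega
      · exact ha x (List.mem_of_mem_tail h)
    · simp only [List.mem_singleton] at h; omega
  obtain ⟨-, -, hkey2⟩ := mrec_key _ hents2
  obtain ⟨-, hval2⟩ := hkey2 (by simp)
  rw [eL2] at hval2
  dsimp only at hval2
  have hN2 : (a.head hne + 1) * (2 * pt + bt) - (2 * qt + dt) = (m + k) ^ 2 := by
    have h' : 2 * (p + q) + b + d = (m + k) ^ 2 := by rw [hpm, hqm, hbv, hdv]; ring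
    linear_combination h' - 2 * f11 - 2 * f12 - f21 - f22
  have hQ2 : 2 * pt + bt = (m + k) * k + ε := by
    have h' : 2 * q + d = (m + k) * k + ε := by rw [hqm, hdv]; ring
    linear_combination h' - 2 * f12 - f22
  rw [hval2, hN2, hQ2]
  push_cast
  ring
end
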